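/- Write g(x) = ∑_{n ≥ 0} a_n x^n with a_n ∈ R. Then for all n ≥ 0: a_{2n+1} = 0, and a_{2n} = (−aq;q²)_n (−dq;q²)_n / ((q²;q²)_n (cq;q²)_n), where (q²;q²)_n (cq;q²)_n is invertible in R since it has constant term 1. -/

import Mathlib

open Finset PowerSeries

namespace Primc

/-- Colours: `0 = a`, `1 = b`, `2 = c`, `3 = d`. -/
abbrev Colour := Fin 4

/-- A coloured part `k_z`: an underlying integer `k` together with its colour `z`. -/
abbrev CPart := ℕ × Colour

/-- The matrix `D` of minimal differences, with rows and columns indexed by the colours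
`a, b, c, d` in this order. -/
def Dmat : Colour → Colour → ℕ := ![![2,1,2,2], ![1,0,1,1], ![0,1,0,2], ![0,1,0,2]]

/-- The position of a coloured part in the total order
`1_a < 1_b < 1_c < 1_d < 2_a < 2_b < 2_c < 2_d < ⋯`. -/
def pos (p : CPart) : ℕ := 4 * p.1 + (p.2 : ℕ)

/-- A Primc partition: a finite sequence of coloured positive integers, non-increasing in the
above total order, in which consecutive parts `λ_i, λ_{i+1}` of colours `x, y` satisfy
`λ_i − λ_{i+1} ≥ D(x,y)`. -/
def IsPrimc (l : List CPart) : Prop :=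
  (∀ p ∈ l, 1 ≤ p.1) ∧
  l.Chain' fun p r => pos r ≤ pos p ∧ r.1 + Dmat p.2 r.2 ≤ p.1

/-- The weight of a coloured partition: the sum of the underlying integers of its parts. -/
def wt (l : List CPart) : ℕ := (l.map Prod.fst).sum

/-- The number of parts of colour `z`. -/
def nc (l : List CPart) (z : Colour) : ℕ := l.countP fun p => p.2 == z

/-- `R₀ = ℤ[a,c,d]`, with `a = X 0`, `c = X 1`, `d = X 2`. -/
abbrev R0 := MvPolynomial (Fin 3) ℤ

/-- `R = ℤ[a,c,d][[q]]`. -/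
abbrev R := PowerSeries R0

/-- The variable `q`. -/
noncomputable def qq : R := PowerSeries.X

/-- The variable `a`. -/
noncomputable def av : R0 := MvPolynomial.X 0

/-- The variable `c`. -/
noncomputable def cv : R0 := MvPolynomial.X 1

/-- The variable `d`. -/
noncomputable def dv : R0 := MvPolynomial.X 2

/-- The monomial `a^{#(a-parts)} c^{#(c-parts)} d^{#(d-parts)}` attached to a coloured
partition. -/
noncomputable def mono (l : List CPart) : R0 := av ^ nc l 0 * cv ^ nc l 2 * dv ^ nc l 3

/-- The infinite product `∏_{j ≥ 0} f j`, defined coefficientwise: the coefficient of `qⁿ` is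
the corresponding coefficient of the partial product `∏_{j ≤ n} f j`.  This agrees with the
usual (coefficientwise convergent) infinite product whenever the factor `f j` is `≡ 1`
modulo `q^{j+1}`, as is the case for all products appearing here. -/
noncomputable def iprod (f : ℕ → R) : R :=
  PowerSeries.mk fun n => PowerSeries.coeff n (∏ j ∈ Finset.range (n + 1), f j)

/-- The largest part of a Primc partition (its parts being written in non-increasing order),
with the convention that the empty partition has largest part `0_b`. -/
def top (l : List CPart) : CPart := l.headD (0, 1)

/-- `G_{k_x} ∈ R`: the sum of `q^{|λ|} a^{#(a-parts)} c^{#(c-parts)} d^{#(d-parts)}` over all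
Primc partitions `λ` whose largest part is at most `k_x` in the colour order. -/
noncomputable def G (k : ℕ) (x : Colour) : R :=
  PowerSeries.mk fun n =>
    ∑ᶠ lam : {l : List CPart // IsPrimc l ∧ wt l = n ∧ pos (top l) ≤ pos (k, x)}, mono lam.1

/-- `E_{k_x} ∈ R`: the sum of `q^{|λ|} a^{#(a-parts)} c^{#(c-parts)} d^{#(d-parts)}` over all
Primc partitions `λ` whose largest part is exactly `k_x` (so `E_{0_b} = 1`, the empty
partition having largest part `0_b` by convention). -/
noncomputable def E (k : ℕ) (x : Colour) : R :=
  PowerSeries.mk fun n =>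
    ∑ᶠ lam : {l : List CPart // IsPrimc l ∧ wt l = n ∧ top l = (k, x)}, mono lam.1

/-- `H_k = G_{k_d} (1 − q^{k+1})⁻¹ ∈ R` for `k ≥ 0`. -/
noncomputable def H (k : ℕ) : R := G k 3 * Ring.inverse (1 - qq ^ (k + 1))

/-- `f(x) = ∑_{k ≥ 0} H_{k−1} x^k ∈ R[[x]]`, with the convention `H_{−1} = 1`. -/
noncomputable def fser : PowerSeries R :=
  PowerSeries.mk fun k => if k = 0 then 1 else H (k - 1)
/-- `(−x;q)_∞ = ∏_{j ≥ 0} (1 + x q^j) ∈ R[[x]]`, defined coefficientwise: its coefficient of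
`xⁿ qᵐ` is the corresponding coefficient of the partial product `∏_{j ≤ m} (1 + x q^j)`
(factors with `j > m` cannot contribute to the coefficient of `qᵐ`). -/
noncomputable def negxq : PowerSeries R :=
  PowerSeries.mk fun n => PowerSeries.mk fun m =>
    PowerSeries.coeff m (PowerSeries.coeff n
      (∏ j ∈ Finset.range (m + 1), (1 + PowerSeries.X * PowerSeries.C (qq ^ j))))

/-- `g(x) = f(x)/(−x;q)_∞ ∈ R[[x]]`; the inverse of `(−x;q)_∞` (whose constant coefficient
is `1 ∈ R`) is given by `Ring.inverse`. -/
noncomputable def gser : PowerSeries R := fser * Ring.inverse negxq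

open scoped Classical

@[simp] lemma cval0 : ((0 : Colour) : ℕ) = 0 := rfl
@[simp] lemma cval1 : ((1 : Colour) : ℕ) = 1 := rfl
@[simp] lemma cval2 : ((2 : Colour) : ℕ) = 2 := rfl
@[simp] lemma cval3 : ((3 : Colour) : ℕ) = 3 := rfl

-- infrastructure
def PSet (n : ℕ) (P : CPart → Prop) : Set (List CPart) :=
  {l | IsPrimc l ∧ wt l = n ∧ P (top l)}

lemma wt_bound {l : List CPart} (hl : IsPrimc l) {p : CPart} (hp : p ∈ l) : p.1 ≤ wt l :=
  List.single_le_sum (fun _ _ => Nat.zero_le _) _ (List.mem_map_of_mem (f := Prod.fst) hp)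

lemma length_le_wt {l : List CPart} (hl : IsPrimc l) : l.length ≤ wt l := by
  have : (l.map Prod.fst).length ≤ (l.map Prod.fst).sum :=
    List.length_le_sum_of_one_le _ (by
      intro i hi
      obtain ⟨p, hp, rfl⟩ := List.mem_map.1 hi
      exact hl.1 p hp)
  simpa [wt] using this

lemma finite_PSet (n : ℕ) (P : CPart → Prop) : (PSet n P).Finite := by
  have h : PSet n P ⊆
      (fun l : List (Fin (n+1) × Colour) => l.map fun p => ((p.1 : ℕ), p.2)) ''
        {l : List (Fin (n+1) × Colour) | l.length ≤ n} := by
    rintro l ⟨hl, hw, -⟩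
    have hb : ∀ p ∈ l, p.1 ≤ n := fun p hp => hw ▸ wt_bound hl hp
    refine ⟨l.map (fun p => (⟨min p.1 n, by omega⟩, p.2)), ?_, ?_⟩
    · simpa using hw ▸ length_le_wt hl
    · show List.map _ (List.map _ l) = l
      rw [List.map_map]
      conv_rhs => rw [show l = l.map id from (List.map_id l).symm]
      refine List.map_congr_left fun p hp => ?_
      have := hb p hp
      simp [Function.comp_def, Nat.min_eq_left this]
  exact ((List.finite_length_le _ n).image _).subset h

noncomputable def S (n : ℕ) (P : CPart → Prop) : R0 := ∑ᶠ l ∈ PSet n P, mono l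

lemma coeff_G (k : ℕ) (x : Colour) (n : ℕ) :
    (∑ᶠ lam : {l : List CPart // IsPrimc l ∧ wt l = n ∧ pos (top l) ≤ pos (k, x)}, mono lam.1)
      = S n (fun p => pos p ≤ pos (k, x)) :=
  finsum_set_coe_eq_finsum_mem (s := PSet n fun p => pos p ≤ pos (k, x)) (f := mono)

lemma coeff_E (k : ℕ) (x : Colour) (n : ℕ) :
    (∑ᶠ lam : {l : List CPart // IsPrimc l ∧ wt l = n ∧ top l = (k, x)}, mono lam.1)
      = S n (fun p => p = (k, x)) :=
  finsum_set_coe_eq_finsum_mem (s := PSet n fun p => p = (k, x)) (f := mono)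

lemma S_congr {n : ℕ} {P Q : CPart → Prop} (h : ∀ p, P p ↔ Q p) : S n P = S n Q := by
  have : P = Q := funext fun p => propext (h p)
  rw [this]

lemma S_split {n : ℕ} {P Q : CPart → Prop} (h : ∀ p, ¬ (P p ∧ Q p)) :
    S n (fun p => P p ∨ Q p) = S n P + S n Q := by
  have hu : PSet n (fun p => P p ∨ Q p) = PSet n P ∪ PSet n Q := by
    ext l; simp [PSet]; tauto
  have hd : Disjoint (PSet n P) (PSet n Q) := by
    rw [Set.disjoint_left]
    rintro l ⟨-, -, hP⟩ ⟨-, -, hQ⟩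
    exact h _ ⟨hP, hQ⟩
  rw [S, hu, finsum_mem_union hd (finite_PSet n P) (finite_PSet n Q)]
  rfl

lemma S_zero_pos {P : CPart → Prop} (h : P (0, 1)) : S 0 P = 1 := by
  · have : PSet 0 P = {[]} := by
      ext l
      constructor
      · rintro ⟨hl, hw, -⟩
        have : ∀ p ∈ l, False := by
          intro p hp
          have h1 := hl.1 p hp
          have h2 := wt_bound hl hp
          omega
        cases l with
        | nil => rfl
        | cons p t => exact absurd (this p (by simp)) (by simp)
      · rintro rfl
        exact ⟨⟨by simp, List.IsChain.nil⟩, rfl, h⟩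
    rw [S, this, finsum_mem_singleton]
    simp [mono, nc]

lemma S_zero_neg {P : CPart → Prop} (h : ¬ P (0, 1)) : S 0 P = 0 := by
  · have : PSet 0 P = ∅ := by
      ext l
      simp only [Set.mem_empty_iff_false, iff_false]
      rintro ⟨hl, hw, hP⟩
      have : l = [] := by
        cases l with
        | nil => rfl
        | cons p t =>
          have h1 := hl.1 p (by simp)
          have h2 := wt_bound hl (show p ∈ p :: t by simp)
          omega
      rw [this] at hP
      exact h (by simpa [top] using hP)
    rw [S, this, finsum_mem_empty]

-- chunk B: cons bijection
section B
variable {n k : ℕ} {x : Colour}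

def Allowed (k : ℕ) (x : Colour) (r : CPart) : Prop :=
  pos r ≤ pos (k, x) ∧ r.1 + Dmat x r.2 ≤ k

noncomputable def varf (x : Colour) : R0 :=
  if x = 0 then av else if x = 2 then cv else if x = 3 then dv else 1

lemma pos_inj : Function.Injective pos := by
  rintro ⟨m, i⟩ ⟨m', i'⟩ h
  simp only [pos] at h
  have hi := i.2
  have hi' := i'.2
  have : m = m' ∧ (i : ℕ) = (i' : ℕ) := by omega
  simp [Prod.ext_iff, Fin.ext_iff, this.1, this.2]

lemma finsum_mem_mul_left (c : R0) {s : Set (List CPart)} (hs : s.Finite)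
    (f : List CPart → R0) : ∑ᶠ l ∈ s, c * f l = c * ∑ᶠ l ∈ s, f l := by
  haveI := hs.fintype
  rw [← finsum_set_coe_eq_finsum_mem, ← finsum_set_coe_eq_finsum_mem,
    mul_finsum _ _]

lemma mono_cons (p : CPart) (t : List CPart) : mono (p :: t) = varf p.2 * mono t := by
  obtain ⟨m, i⟩ := p
  have hcount : ∀ z : Colour, nc ((m, i) :: t) z = (if i = z then 1 else 0) + nc t z := by
    intro z
    simp only [nc, List.countP_cons]
    by_cases h : i = z <;> simp [h, Nat.add_comm]
  fin_cases i <;>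
    simp [mono, nc, List.countP_cons, varf, pow_succ] <;> ring

lemma allowed_empty (hk : 1 ≤ k) : Allowed k x (top []) := by
  constructor
  · have : (x : ℕ) ≤ 3 := by omega
    simp only [top, List.headD, pos]
    omega
  · have : Dmat x 1 ≤ 1 := by revert x; decide
    simp only [top, List.headD]
    omega

lemma S_cons (hk : 1 ≤ k) (hn : k ≤ n) :
    S n (fun p => p = (k, x)) = varf x * S (n - k) (Allowed k x) := by
  have himg : PSet n (fun p => p = (k, x)) =
      (List.cons (k, x)) '' PSet (n - k) (Allowed k x) := by
    ext l
    constructor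
    · rintro ⟨hl, hw, htop⟩
      cases l with
      | nil =>
        exfalso
        simp only [top, List.headD] at htop
        have : (0 : ℕ) = k := congrArg Prod.fst htop
        omega
      | cons p t =>
        simp only [top, List.headD] at htop
        subst htop
        refine ⟨t, ⟨⟨fun r hr => hl.1 r (by simp [hr]), hl.2.tail⟩, ?_, ?_⟩, rfl⟩
        · have : wt ((k, x) :: t) = k + wt t := by simp [wt]
          omega
        · cases t with
          | nil => exact allowed_empty hk
          | cons r t' =>
            have := (List.isChain_cons_cons.1 hl.2).1
            exact this
    · rintro ⟨t, ⟨ht, hw, hall⟩, rfl⟩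
      refine ⟨⟨?_, ?_⟩, ?_, ?_⟩
      · intro p hp
        rcases List.mem_cons.1 hp with h | h
        · rw [h]; exact hk
        · exact ht.1 p h
      · rw [show List.Chain' _ _ ↔ _ from List.isChain_cons]
        refine ⟨?_, ht.2⟩
        intro r hr
        cases t with
        | nil => simp at hr
        | cons r' t' =>
          simp only [List.head?_cons, Option.mem_def, Option.some.injEq] at hr
          subst hr
          exact hall
      · have : wt ((k, x) :: t) = k + wt t := by simp [wt]
        omega
      · rfl
  rw [S, himg, finsum_mem_image (fun a _ b _ h => by injection h)]
  rw [finsum_mem_congr rfl fun t _ => mono_cons (k, x) t]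
  rw [finsum_mem_mul_left _ (finite_PSet _ _), ← S]

lemma S_vanish (hk : 1 ≤ k) (hn : n < k) : S n (fun p => p = (k, x)) = 0 := by
  have : PSet n (fun p => p = (k, x)) = ∅ := by
    ext l
    simp only [Set.mem_empty_iff_false, iff_false]
    rintro ⟨hl, hw, htop⟩
    cases l with
    | nil =>
      simp only [top, List.headD] at htop
      have : (0 : ℕ) = k := congrArg Prod.fst htop
      omega
    | cons p t =>
      simp only [top, List.headD] at htop
      subst htop
      have := wt_bound hl (show ((k,x) : CPart) ∈ (k,x) :: t by simp)
      omega
  rw [S, this, finsum_mem_empty]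

end B

section C
variable {n k : ℕ}

lemma allowed_b (hk : 1 ≤ k) (r : CPart) :
    Allowed k 1 r ↔ (pos r ≤ pos (k - 1, 3) ∨ r = (k, 1)) := by
  obtain ⟨m, i⟩ := r
  fin_cases i <;>
    simp [Allowed, pos, Dmat, Prod.ext_iff, Fin.ext_iff, Matrix.vecHead, Matrix.vecTail] <;> omega

lemma allowed_a (hk : 2 ≤ k) (r : CPart) :
    Allowed k 0 r ↔ (pos r ≤ pos (k - 2, 3) ∨ r = (k - 1, 1)) := by
  obtain ⟨m, i⟩ := r
  fin_cases i <;>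
    simp [Allowed, pos, Dmat, Prod.ext_iff, Fin.ext_iff, Matrix.vecHead, Matrix.vecTail] <;> omega

lemma allowed_d_eq_c (r : CPart) : Allowed k 3 r ↔ Allowed k 2 r := by
  obtain ⟨m, i⟩ := r
  fin_cases i <;>
    simp [Allowed, pos, Dmat, Matrix.vecHead, Matrix.vecTail] <;> omega

lemma allowed_c_split (hk : 1 ≤ k) (r : CPart) :
    pos r ≤ pos (k, 2) ↔ (Allowed k 2 r ∨ (r = (k, 1) ∨ r = (k - 1, 3))) := by
  obtain ⟨m, i⟩ := r
  fin_cases i <;>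
    simp [Allowed, pos, Dmat, Prod.ext_iff, Fin.ext_iff, Matrix.vecHead, Matrix.vecTail] <;> omega

lemma pos_split (p q : CPart) (r : CPart) (h : pos q + 1 = pos p) :
    pos r ≤ pos p ↔ (pos r ≤ pos q ∨ r = p) := by
  constructor
  · intro hr
    rcases Nat.lt_or_ge (pos r) (pos p) with h' | h'
    · left; omega
    · right; exact pos_inj (le_antisymm hr h')
  · rintro (hr | rfl)
    · omega
    · exact le_rfl

end C

section D
variable {n k : ℕ} {x : Colour}

lemma G_coeff (k : ℕ) (x : Colour) (n : ℕ) :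
    PowerSeries.coeff n (G k x) = S n (fun p => pos p ≤ pos (k, x)) := by
  rw [G, coeff_mk, coeff_G]

lemma E_coeff (k : ℕ) (x : Colour) (n : ℕ) :
    PowerSeries.coeff n (E k x) = S n (fun p => p = (k, x)) := by
  rw [E, coeff_mk, coeff_E]

lemma S_small {m : ℕ} {P : CPart → Prop} (h : ∀ p, 1 ≤ p.1 → ¬ P p) :
    S m P = if m = 0 ∧ P (0, 1) then 1 else 0 := by
  have hempty : ∀ l ∈ PSet m P, l = [] := by
    rintro l ⟨hl, hw, hP⟩
    cases l with
    | nil => rfl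
    | cons p t =>
      exact absurd hP (h p (hl.1 p (by simp)))
  by_cases hc : m = 0 ∧ P (0, 1)
  · rw [if_pos hc]
    have : PSet m P = {[]} := by
      ext l
      constructor
      · intro hl; exact hempty l hl
      · rintro rfl
        exact ⟨⟨by simp, List.IsChain.nil⟩, by simp [wt, hc.1], hc.2⟩
    rw [S, this, finsum_mem_singleton]
    simp [mono, nc]
  · rw [if_neg hc]
    have : PSet m P = ∅ := by
      ext l
      simp only [Set.mem_empty_iff_false, iff_false]
      intro hl
      have := hempty l hl
      subst this
      obtain ⟨-, hw, hP⟩ := hl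
      exact hc ⟨by simpa [wt] using hw.symm, by simpa [top] using hP⟩
    rw [S, this, finsum_mem_empty]

lemma varf_one : varf 1 = 1 := rfl

/-- splitting of down-sets -/
lemma G_split {p q : CPart} (h : pos q + 1 = pos p) :
    G p.1 p.2 = G q.1 q.2 + E p.1 p.2 := by
  ext n
  rw [map_add, G_coeff, G_coeff, E_coeff]
  rw [S_congr (fun r => pos_split ((p.1, p.2) : CPart) (q.1, q.2) r (by simpa using h))]
  rw [S_split]
  rintro r ⟨h1, rfl⟩
  have h2 : pos ((q.1, q.2) : CPart) + 1 = pos ((p.1, p.2) : CPart) := by simpa using h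
  omega

lemma G_split3 (k : ℕ) : G k 3 = G k 2 + E k 3 :=
  G_split (p := (k, 3)) (q := (k, 2)) (by simp [pos])

lemma G_split2 (k : ℕ) : G k 2 = G k 1 + E k 2 :=
  G_split (p := (k, 2)) (q := (k, 1)) (by simp [pos])

lemma G_split1 (k : ℕ) : G k 1 = G k 0 + E k 1 :=
  G_split (p := (k, 1)) (q := (k, 0)) (by simp [pos])

lemma G_split0 {k : ℕ} (hk : 1 ≤ k) : G k 0 = G (k - 1) 3 + E k 0 :=
  G_split (p := (k, 0)) (q := (k - 1, 3)) (by simp [pos]; omega)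

lemma G_zero : G 0 3 = (1 : R) := by
  ext n
  rw [G_coeff]
  rw [S_small (fun p hp hP => by
      obtain ⟨m, i⟩ := p
      have h3 : (i : ℕ) < 4 := i.2
      simp only [pos, cval3] at hP
      simp only at hp
      omega)]
  have h1 : pos ((0 : ℕ), (1 : Colour)) ≤ pos ((0 : ℕ), (3 : Colour)) := by simp [pos]
  simp [coeff_one, h1]

lemma E_zero3 : E 0 3 = 0 := by
  ext n
  rw [E_coeff]
  rw [S_small (fun p hp hP => by
      rw [hP] at hp
      simp at hp)]
  have h1 : ¬ (((0 : ℕ), (1 : Colour)) = (((0 : ℕ), (3 : Colour)) : CPart)) := by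
    simp [Prod.ext_iff]
  simp [h1]

end D

section E
variable {n k : ℕ}

lemma S_eq01 (m : ℕ) : S m (fun p => p = ((0 : ℕ), (1 : Colour))) = if m = 0 then 1 else 0 := by
  rw [S_small (fun p hp hP => by rw [hP] at hp; simp at hp)]
  simp

lemma L1 (hk : 1 ≤ k) : (1 - qq ^ k) * E k 1 = qq ^ k * G (k - 1) 3 := by
  ext n
  rw [sub_mul, one_mul, map_sub, qq, coeff_X_pow_mul', coeff_X_pow_mul']
  by_cases hn : k ≤ n
  · rw [if_pos hn, if_pos hn, E_coeff, E_coeff, G_coeff]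
    rw [S_cons hk hn, varf_one, one_mul, S_congr (allowed_b hk),
      S_split (by
        rintro r ⟨h1, rfl⟩
        simp only [pos, cval1, cval3] at h1
        omega)]
    ring
  · rw [if_neg hn, if_neg hn, E_coeff, S_vanish hk (by omega), sub_zero]

lemma L2 (hk : 2 ≤ k) : E k 0 = PowerSeries.C av * (qq ^ k * (G (k - 2) 3 + E (k - 1) 1)) := by
  ext n
  rw [coeff_C_mul, qq, coeff_X_pow_mul', E_coeff]
  by_cases hn : k ≤ n
  · rw [if_pos hn, S_cons (by omega) hn, S_congr (allowed_a hk),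
      S_split (by
        rintro r ⟨h1, rfl⟩
        simp only [pos, cval1, cval3] at h1
        omega), map_add, G_coeff, E_coeff]
    rfl
  · rw [if_neg hn, S_vanish (by omega) (by omega), mul_zero]

lemma allowed_10 (r : CPart) : Allowed 1 0 r ↔ r = ((0 : ℕ), (1 : Colour)) := by
  obtain ⟨m, i⟩ := r
  fin_cases i <;>
    simp [Allowed, pos, Dmat, Prod.ext_iff, Fin.ext_iff, Matrix.vecHead, Matrix.vecTail] <;>
    omega

lemma L2' : E 1 0 = PowerSeries.C av * qq := by
  ext n
  rw [coeff_C_mul, qq, E_coeff]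
  by_cases hn : 1 ≤ n
  · rw [S_cons le_rfl hn, S_congr allowed_10, S_eq01]
    have : PowerSeries.coeff n (PowerSeries.X : R) = if n = 1 then 1 else 0 :=
      PowerSeries.coeff_X n
    rw [this]
    rcases Nat.eq_or_lt_of_le hn with h | h
    · simp [← h, varf]
    · rw [if_neg (by omega), if_neg (by omega)]
      simp [varf]
  · rw [S_vanish le_rfl (by omega)]
    rw [PowerSeries.coeff_X]
    rw [if_neg (by omega), mul_zero]

lemma SW (hk : 1 ≤ k) (m : ℕ) :
    S m (Allowed k 2) = S m (fun p => pos p ≤ pos (k, 2))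
      - S m (fun p => p = (k, 1)) - S m (fun p => p = (k - 1, 3)) := by
  have h1 : S m (fun p => pos p ≤ pos (k, 2))
      = S m (Allowed k 2) + (S m (fun p => p = (k, 1)) + S m (fun p => p = (k - 1, 3))) := by
    rw [S_congr (allowed_c_split hk)]
    rw [S_split (by
      rintro r ⟨h1, (rfl | rfl)⟩ <;>
        simp_all [Allowed, Dmat, Matrix.vecHead, Matrix.vecTail] <;> omega)]
    congr 1
    rw [S_split (by
      rintro r ⟨rfl, h2⟩
      have := congrArg Prod.snd h2
      simp at this)]
  rw [h1]; ring

lemma L3 (hk : 1 ≤ k) :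
    E k 2 = PowerSeries.C cv * (qq ^ k * (G k 2 - E k 1 - E (k - 1) 3)) := by
  ext n
  rw [coeff_C_mul, qq, coeff_X_pow_mul', E_coeff]
  by_cases hn : k ≤ n
  · rw [if_pos hn, S_cons hk hn, map_sub, map_sub, G_coeff, E_coeff, E_coeff, ← SW hk]
    rfl
  · rw [if_neg hn, S_vanish hk (by omega), mul_zero]

lemma L4 (hk : 1 ≤ k) :
    E k 3 = PowerSeries.C dv * (qq ^ k * (G k 2 - E k 1 - E (k - 1) 3)) := by
  ext n
  rw [coeff_C_mul, qq, coeff_X_pow_mul', E_coeff]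
  by_cases hn : k ≤ n
  · rw [if_pos hn, S_cons hk hn, map_sub, map_sub, G_coeff, E_coeff, E_coeff, ← SW hk,
      S_congr (fun r => allowed_d_eq_c r)]
    rfl
  · rw [if_neg hn, S_vanish hk (by omega), mul_zero]

end E

section F
variable {k : ℕ}

lemma isUnit_one_sub (F : R) (h : PowerSeries.constantCoeff F = 0) : IsUnit (1 - F) := by
  rw [PowerSeries.isUnit_iff_constantCoeff, map_sub, map_one, h, sub_zero]
  exact isUnit_one

lemma constCoeff_qq_pow (hk : 1 ≤ k) : PowerSeries.constantCoeff (qq ^ k) = 0 := by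
  rw [qq, map_pow, PowerSeries.constantCoeff_X, zero_pow (by omega)]

lemma isUnit_one_sub_qq_pow (hk : 1 ≤ k) : IsUnit ((1 : R) - qq ^ k) :=
  isUnit_one_sub _ (constCoeff_qq_pow hk)

noncomputable def hseq : ℕ → R := fun k => if k = 0 then 1 else H (k - 1)

noncomputable def wseq : ℕ → R := fun k =>
  if k = 0 then 0 else G k 2 - E k 1 - E (k - 1) 3

lemma hseq_zero : hseq 0 = 1 := rfl
lemma wseq_zero : wseq 0 = 0 := rfl

lemma Gh (hk : 1 ≤ k) : G (k - 1) 3 = (1 - qq ^ k) * hseq k := by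
  rw [hseq, if_neg (by omega), H]
  have : k - 1 + 1 = k := by omega
  rw [this, ← mul_assoc, mul_comm (1 - qq ^ k), mul_assoc,
    Ring.mul_inverse_cancel _ (isUnit_one_sub_qq_pow hk), mul_one]

lemma Eb (hk : 1 ≤ k) : E k 1 = qq ^ k * hseq k := by
  have h1 := L1 hk
  have hu := isUnit_one_sub_qq_pow hk
  have : E k 1 = Ring.inverse (1 - qq ^ k) * ((1 - qq ^ k) * E k 1) := by
    rw [← mul_assoc, Ring.inverse_mul_cancel _ hu, one_mul]
  rw [this, h1, Gh hk]
  linear_combination (qq ^ k * hseq k) * (Ring.inverse_mul_cancel _ hu)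

lemma Ea (hk : 1 ≤ k) : E k 0 = PowerSeries.C av * qq ^ k * hseq (k - 1) := by
  rcases Nat.lt_or_ge k 2 with h2 | h2
  · have : k = 1 := by omega
    subst this
    rw [L2', hseq_zero, mul_one, pow_one]
  · have hGh := Gh (k := k - 1) (by omega)
    rw [show k - 1 - 1 = k - 2 from by omega] at hGh
    rw [L2 h2, hGh, Eb (k := k - 1) (by omega)]
    ring

lemma Ed : ∀ k, E k 3 = PowerSeries.C dv * qq ^ k * wseq k := by
  intro k
  rcases Nat.eq_zero_or_pos k with rfl | hk
  · rw [E_zero3, wseq_zero, mul_zero]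
  · rw [L4 hk, wseq, if_neg (by omega)]
    ring

lemma Ec (hk : 1 ≤ k) : E k 2 = PowerSeries.C cv * qq ^ k * wseq k := by
  rw [L3 hk, wseq, if_neg (by omega)]
  ring

lemma seq2 (hk : 1 ≤ k) :
    (1 - PowerSeries.C cv * qq ^ k) * wseq k
      = (1 - qq ^ k) * hseq k + PowerSeries.C av * qq ^ k * hseq (k - 1)
        - PowerSeries.C dv * qq ^ (k - 1) * wseq (k - 1) := by
  have hw : wseq k = G k 2 - E k 1 - E (k - 1) 3 := by rw [wseq, if_neg (by omega)]
  have hG : G k 2 = G (k - 1) 3 + E k 0 + E k 1 + E k 2 := by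
    rw [G_split2 k, G_split1 k, G_split0 hk]
  have h3 := Ed (k - 1)
  linear_combination hw + hG + Gh hk + Ea hk + Ec hk - h3

lemma seq1 (k : ℕ) :
    (1 - qq ^ (k + 1)) * hseq (k + 1)
      = (1 + PowerSeries.C dv * qq ^ k) * wseq k + qq ^ k * hseq k
        + PowerSeries.C dv * qq ^ (k - 1) * wseq (k - 1) := by
  rcases Nat.eq_zero_or_pos k with rfl | hk
  · have h1 : G 0 3 = (1 - qq ^ 1) * hseq 1 := Gh le_rfl
    rw [G_zero] at h1
    simp only [zero_add, Nat.zero_sub, wseq_zero, hseq_zero]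
    linear_combination (-1 : R) * h1
  · have h0 : G k 3 = (1 - qq ^ (k + 1)) * hseq (k + 1) := by
      have := Gh (k := k + 1) (by omega)
      simpa using this
    have hw : wseq k = G k 2 - E k 1 - E (k - 1) 3 := by rw [wseq, if_neg (by omega)]
    have h1 : G k 3 = G k 2 + E k 3 := G_split3 k
    linear_combination (-1 : R) * h0 + h1 - hw + Eb hk + Ed k + Ed (k - 1)

end F

section G
noncomputable def wser : PowerSeries R := PowerSeries.mk wseq

lemma coeff_fser (n : ℕ) : PowerSeries.coeff n fser = hseq n := by
  rw [fser, coeff_mk, hseq]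

lemma coeff_wser (n : ℕ) : PowerSeries.coeff n wser = wseq n := by
  rw [wser, coeff_mk]

lemma coeffS_X_mul (F : PowerSeries R) (n : ℕ) :
    PowerSeries.coeff n (PowerSeries.X * F) =
      if 1 ≤ n then PowerSeries.coeff (n - 1) F else 0 := by
  rw [← pow_one (PowerSeries.X : PowerSeries R), PowerSeries.coeff_X_pow_mul']

lemma coeffS_X2_mul (F : PowerSeries R) (n : ℕ) :
    PowerSeries.coeff n (PowerSeries.X ^ 2 * F) =
      if 2 ≤ n then PowerSeries.coeff (n - 2) F else 0 :=
  PowerSeries.coeff_X_pow_mul' F 2 n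

noncomputable abbrev CS : R →+* PowerSeries R := PowerSeries.C
noncomputable abbrev aS : PowerSeries R := CS (PowerSeries.C av)
noncomputable abbrev cS : PowerSeries R := CS (PowerSeries.C cv)
noncomputable abbrev dS : PowerSeries R := CS (PowerSeries.C dv)

lemma E1lem : fser - PowerSeries.rescale qq fser
    = PowerSeries.X * wser + dS * (PowerSeries.X * PowerSeries.rescale qq wser)
      + PowerSeries.X * PowerSeries.rescale qq fser
      + dS * (PowerSeries.X ^ 2 * PowerSeries.rescale qq wser) := by
  refine PowerSeries.ext fun n => ?_
  simp only [map_sub, map_add, PowerSeries.coeff_C_mul, coeffS_X_mul, coeffS_X2_mul,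
    PowerSeries.coeff_rescale, coeff_fser, coeff_wser]
  match n with
  | 0 => simp
  | 1 =>
    norm_num
    have s := seq1 0
    simp only [Nat.zero_sub] at s
    linear_combination s + PowerSeries.C dv * wseq_zero
  | (k + 2) =>
    simp only [if_pos (by omega : (1:ℕ) ≤ k + 2), if_pos (by omega : (2:ℕ) ≤ k + 2)]
    simp only [show k + 2 - 1 = k + 1 from rfl, show k + 2 - 2 = k from rfl]
    have s := seq1 (k + 1)
    simp only [Nat.add_sub_cancel] at s
    linear_combination s

lemma E2lem : wser - cS * PowerSeries.rescale qq wser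
    = fser - PowerSeries.rescale qq fser
      + aS * (CS qq * (PowerSeries.X * PowerSeries.rescale qq fser))
      - dS * (PowerSeries.X * PowerSeries.rescale qq wser) := by
  refine PowerSeries.ext fun n => ?_
  simp only [map_sub, map_add, PowerSeries.coeff_C_mul, coeffS_X_mul,
    PowerSeries.coeff_rescale, coeff_fser, coeff_wser]
  match n with
  | 0 => simp [wseq_zero]
  | (k + 1) =>
    simp only [if_pos (by omega : (1:ℕ) ≤ k + 1)]
    simp only [Nat.add_sub_cancel]
    have s := seq2 (k := k + 1) (by omega)
    simp only [Nat.add_sub_cancel] at s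
    linear_combination s
end G

section T
lemma rescaleqq_C (r : R) : PowerSeries.rescale qq (CS r) = CS r := by
  refine PowerSeries.ext fun n => ?_
  rw [PowerSeries.coeff_rescale]
  rcases n with - | n
  · simp
  · simp [PowerSeries.coeff_C]

lemma Tlem : CS qq * ((1 - PowerSeries.X) * fser)
    = (CS qq + cS + (aS + dS) * CS (qq ^ 2) * PowerSeries.X ^ 2)
        * PowerSeries.rescale qq fser
      + (1 + CS qq * PowerSeries.X) * (aS * dS * CS (qq ^ 3) * PowerSeries.X ^ 2 - cS)
        * PowerSeries.rescale qq (PowerSeries.rescale qq fser) := by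
  have e1 := E1lem
  have e2 := E2lem
  have re1 := congrArg (PowerSeries.rescale qq) e1
  have re2 := congrArg (PowerSeries.rescale qq) e2
  simp only [map_sub, map_add, map_mul, map_pow, PowerSeries.rescale_X, rescaleqq_C,
    map_one] at re1 re2
  simp only [map_pow]
  linear_combination
    CS qq * e1 + CS qq * PowerSeries.X * e2
    + (dS * CS qq * PowerSeries.X - cS) * re1
    + dS * CS qq * PowerSeries.X * (1 + CS qq * PowerSeries.X) * re2
end T

section N
noncomputable def Np (M : ℕ) : PowerSeries R :=
  ∏ j ∈ Finset.range M, (1 + PowerSeries.X * PowerSeries.C (qq ^ j))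

lemma coeff_negxq (n : ℕ) : PowerSeries.coeff n negxq
    = PowerSeries.mk fun m => PowerSeries.coeff m (PowerSeries.coeff n (Np (m + 1))) := by
  rw [negxq, PowerSeries.coeff_mk]
  rfl

lemma NpX0 (M : ℕ) : PowerSeries.coeff 0 (Np M) = 1 := by
  rw [PowerSeries.coeff_zero_eq_constantCoeff, Np, map_prod]
  refine Finset.prod_eq_one fun j _ => ?_
  simp

lemma coeff_mul_CX (F : PowerSeries R) (r : R) (n : ℕ) :
    PowerSeries.coeff n (F * (PowerSeries.X * CS r)) =
      if 1 ≤ n then PowerSeries.coeff (n - 1) F * r else 0 := by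
  rw [show F * (PowerSeries.X * CS r) = PowerSeries.X * (F * CS r) from by ring,
    coeffS_X_mul]
  split_ifs with h
  · rw [PowerSeries.coeff_mul_C]
  · rfl

lemma stab1 {n m M : ℕ} (h : m + 1 ≤ M) :
    PowerSeries.coeff m (PowerSeries.coeff n (Np M))
      = PowerSeries.coeff m (PowerSeries.coeff n (Np (m + 1))) := by
  induction M, h using Nat.le_induction with
  | base => rfl
  | succ M hM ih =>
    rw [Np, Finset.prod_range_succ, ← Np, mul_add, mul_one, map_add, map_add,
      coeff_mul_CX]
    split_ifs with h1
    · rw [qq, PowerSeries.coeff_mul_X_pow', if_neg (by omega), add_zero]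
      exact ih
    · rw [map_zero, add_zero]; exact ih

lemma stab {n m M M' : ℕ} (h : m + 1 ≤ M) (h' : m + 1 ≤ M') :
    PowerSeries.coeff m (PowerSeries.coeff n (Np M))
      = PowerSeries.coeff m (PowerSeries.coeff n (Np M')) := by
  rw [stab1 h, stab1 h']

lemma FP (M : ℕ) : Np (M + 1) = (1 + PowerSeries.X) * PowerSeries.rescale qq (Np M) := by
  have h1 : PowerSeries.rescale qq (Np M)
      = ∏ j ∈ Finset.range M, (1 + PowerSeries.X * PowerSeries.C (qq ^ (j + 1))) := by
    rw [Np, map_prod]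
    refine Finset.prod_congr rfl fun j _ => ?_
    rw [map_add, map_one, map_mul, PowerSeries.rescale_X, rescaleqq_C]
    rw [show PowerSeries.C qq * PowerSeries.X * CS (qq ^ j)
        = PowerSeries.X * (CS qq * CS (qq ^ j)) from by ring, ← map_mul, ← pow_succ']
  rw [h1, Np, Finset.prod_range_succ']
  simp [mul_comm]

lemma Nlem : negxq = (1 + PowerSeries.X) * PowerSeries.rescale qq negxq := by
  refine PowerSeries.ext fun n => ?_
  rw [add_mul, one_mul, map_add, coeffS_X_mul, PowerSeries.coeff_rescale]
  match n with
  | 0 =>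
    rw [if_neg (by omega), pow_zero, one_mul, add_zero]
  | (k + 1) =>
    rw [if_pos (by omega), PowerSeries.coeff_rescale]
    simp only [Nat.add_sub_cancel]
    refine PowerSeries.ext fun m => ?_
    rw [coeff_negxq, PowerSeries.coeff_mk, map_add]
    -- LHS: coeff m coeff (k+1) (Np (m+1)); use FP m
    rw [FP m, add_mul, one_mul, map_add, coeffS_X_mul, if_pos (by omega),
      PowerSeries.coeff_rescale, PowerSeries.coeff_rescale, map_add]
    simp only [Nat.add_sub_cancel]
    -- now LHS = coeff_m (qq^{k+1} * coeff_{k+1} Np m) + coeff_m (qq^k * coeff_k Np m)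
    rw [qq, PowerSeries.coeff_X_pow_mul', PowerSeries.coeff_X_pow_mul',
      PowerSeries.coeff_X_pow_mul', PowerSeries.coeff_X_pow_mul']
    congr 1
    · split_ifs with h1
      · rw [PowerSeries.coeff_mk]
        exact stab (by omega) (by omega)
      · rfl
    · split_ifs with h1
      · rw [coeff_negxq, PowerSeries.coeff_mk]
        rcases Nat.eq_zero_or_pos k with rfl | hk
        · rw [NpX0, NpX0]
        · exact stab (by omega) (by omega)
      · rfl

lemma negxq_const : PowerSeries.constantCoeff negxq = 1 := by
  rw [← PowerSeries.coeff_zero_eq_constantCoeff, coeff_negxq]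
  refine PowerSeries.ext fun m => ?_
  rw [PowerSeries.coeff_mk, NpX0]

lemma negxq_unit : IsUnit negxq := by
  rw [PowerSeries.isUnit_iff_constantCoeff, negxq_const]
  exact isUnit_one
end N

section SP
lemma fser_eq : fser = negxq * gser := by
  have hu := Ring.mul_inverse_cancel negxq negxq_unit
  rw [gser]
  linear_combination (-fser) * hu

lemma hXq_ne : (1 + CS qq * PowerSeries.X : PowerSeries R) ≠ 0 := by
  intro h
  have := congrArg (PowerSeries.constantCoeff) h
  simp only [map_add, map_one, map_mul, PowerSeries.constantCoeff_X, mul_zero, add_zero,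
    map_zero] at this
  exact one_ne_zero this

lemma negxq_ne : negxq ≠ 0 := by
  intro h
  have := negxq_const
  rw [h, map_zero] at this
  exact zero_ne_one this

lemma spade : CS qq * gser - CS qq * (PowerSeries.X ^ 2 * gser)
    = CS qq * PowerSeries.rescale qq gser
      + CS (PowerSeries.C cv) * PowerSeries.rescale qq gser
      + CS ((PowerSeries.C av + PowerSeries.C dv) * qq ^ 2)
          * (PowerSeries.X ^ 2 * PowerSeries.rescale qq gser)
      + CS (PowerSeries.C av * PowerSeries.C dv * qq ^ 3)
          * (PowerSeries.X ^ 2 * PowerSeries.rescale qq (PowerSeries.rescale qq gser))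
      - CS (PowerSeries.C cv) * PowerSeries.rescale qq (PowerSeries.rescale qq gser) := by
  apply mul_left_cancel₀ (mul_ne_zero negxq_ne hXq_ne)
  have t := Tlem
  have hf := fser_eq
  have rf := congrArg (PowerSeries.rescale qq) hf
  have rrf := congrArg (PowerSeries.rescale qq) rf
  have n1 := Nlem
  have n2 := congrArg (PowerSeries.rescale qq) n1
  simp only [map_mul, map_add, map_one, PowerSeries.rescale_X, rescaleqq_C] at rf rrf n2
  simp only [map_pow] at t
  simp only [map_add, map_mul, map_pow]
  linear_combination
    ((1 + PowerSeries.X) * (1 + CS qq * PowerSeries.X)) * t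
    + (-(1 + PowerSeries.X) * (1 + CS qq * PowerSeries.X) * CS qq * (1 - PowerSeries.X)) * hf
    + ((1 + PowerSeries.X) * (1 + CS qq * PowerSeries.X)
        * (CS qq + cS + (aS + dS) * CS qq ^ 2 * PowerSeries.X ^ 2)) * rf
    + ((1 + PowerSeries.X) * (1 + CS qq * PowerSeries.X) ^ 2
        * (aS * dS * CS qq ^ 3 * PowerSeries.X ^ 2 - cS)) * rrf
    + (-(1 + CS qq * PowerSeries.X)
        * ((CS qq + cS + (aS + dS) * CS qq ^ 2 * PowerSeries.X ^ 2)
            * PowerSeries.rescale qq gser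
          + (aS * dS * CS qq ^ 3 * PowerSeries.X ^ 2 - cS)
            * PowerSeries.rescale qq (PowerSeries.rescale qq gser))) * n1
    + (-(1 + PowerSeries.X) * (1 + CS qq * PowerSeries.X)
        * (aS * dS * CS qq ^ 3 * PowerSeries.X ^ 2 - cS)
        * PowerSeries.rescale qq (PowerSeries.rescale qq gser)) * n2

lemma grec (m : ℕ) :
    qq * ((1 - qq ^ (m + 2)) * ((1 - PowerSeries.C cv * qq ^ (m + 1))
        * PowerSeries.coeff (m + 2) gser))
      = qq * ((1 + PowerSeries.C av * qq ^ (m + 1))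
          * ((1 + PowerSeries.C dv * qq ^ (m + 1)) * PowerSeries.coeff m gser)) := by
  have sp := congrArg (PowerSeries.coeff (m + 2)) spade
  simp only [map_sub, map_add, PowerSeries.coeff_C_mul, coeffS_X2_mul,
    PowerSeries.coeff_rescale, if_pos (by omega : 2 ≤ m + 2)] at sp
  simp only [show m + 2 - 2 = m from rfl] at sp
  linear_combination sp

lemma grec1 : qq * ((1 - qq) * ((1 - PowerSeries.C cv) * PowerSeries.coeff 1 gser)) = 0 := by
  have sp := congrArg (PowerSeries.coeff 1) spade
  simp only [map_sub, map_add, PowerSeries.coeff_C_mul, coeffS_X2_mul,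
    PowerSeries.coeff_rescale, if_neg (by omega : ¬ 2 ≤ 1)] at sp
  linear_combination sp

lemma g0 : PowerSeries.coeff 0 gser = 1 := by
  have h2 : PowerSeries.constantCoeff negxq
      * PowerSeries.constantCoeff (Ring.inverse negxq) = 1 := by
    rw [← map_mul, Ring.mul_inverse_cancel _ negxq_unit, map_one]
  rw [negxq_const, one_mul] at h2
  rw [gser, PowerSeries.coeff_zero_eq_constantCoeff, map_mul, h2, mul_one,
    ← PowerSeries.coeff_zero_eq_constantCoeff, coeff_fser, hseq_zero]

lemma qq_ne : (qq : R) ≠ 0 := by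
  rw [qq]
  exact PowerSeries.X_ne_zero

lemma one_sub_ne {F : R} (h : PowerSeries.constantCoeff F = 0) : (1 : R) - F ≠ 0 := by
  intro h0
  have := congrArg (PowerSeries.constantCoeff) h0
  rw [map_sub, map_one, h, sub_zero, map_zero] at this
  exact one_ne_zero this

lemma ccC_mul_qq_pow (r : R0) (j : ℕ) (hj : 1 ≤ j) :
    PowerSeries.constantCoeff (PowerSeries.C r * qq ^ j) = 0 := by
  rw [map_mul, constCoeff_qq_pow hj, mul_zero]

end SP

section FIN

noncomputable def vval (n : ℕ) : R :=
  (∏ j ∈ Finset.range n, (1 + PowerSeries.C av * qq ^ (2 * j + 1))) *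
    (∏ j ∈ Finset.range n, (1 + PowerSeries.C dv * qq ^ (2 * j + 1))) *
    Ring.inverse ((∏ j ∈ Finset.range n, (1 - qq ^ (2 * j + 2))) *
      ∏ j ∈ Finset.range n, (1 - PowerSeries.C cv * qq ^ (2 * j + 1)))

lemma one_sub_Ccv_ne : (1 : R) - PowerSeries.C cv ≠ 0 := by
  intro h0
  have h1 := congrArg (PowerSeries.constantCoeff) h0
  rw [map_sub, map_one, PowerSeries.constantCoeff_C, map_zero] at h1
  have h2 := congrArg (MvPolynomial.coeff 0) h1
  simp [cv] at h2

lemma cancel3 {A B C x y : R} (hA : A ≠ 0) (hB : B ≠ 0) (hC : C ≠ 0)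
    (h : A * (B * (C * x)) = A * (B * (C * y))) : x = y :=
  mul_left_cancel₀ hC (mul_left_cancel₀ hB (mul_left_cancel₀ hA h))

lemma Qden_unit (n : ℕ) :
    IsUnit ((∏ j ∈ Finset.range n, (1 - qq ^ (2 * j + 2))) *
      ∏ j ∈ Finset.range n, (1 - PowerSeries.C cv * qq ^ (2 * j + 1))) := by
  rw [PowerSeries.isUnit_iff_constantCoeff, map_mul, map_prod, map_prod]
  have h1 : ∀ j ∈ Finset.range n,
      PowerSeries.constantCoeff (1 - qq ^ (2 * j + 2)) = 1 := fun j _ => by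
    rw [map_sub, map_one, constCoeff_qq_pow (by omega), sub_zero]
  have h2 : ∀ j ∈ Finset.range n,
      PowerSeries.constantCoeff (1 - PowerSeries.C cv * qq ^ (2 * j + 1)) = 1 :=
    fun j _ => by
    rw [map_sub, map_one, ccC_mul_qq_pow _ _ (by omega), sub_zero]
  rw [Finset.prod_congr rfl h1, Finset.prod_congr rfl h2]
  simp

lemma vrec (n : ℕ) :
    (1 - qq ^ (2 * n + 2)) * ((1 - PowerSeries.C cv * qq ^ (2 * n + 1)) * vval (n + 1))
      = (1 + PowerSeries.C av * qq ^ (2 * n + 1))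
          * ((1 + PowerSeries.C dv * qq ^ (2 * n + 1)) * vval n) := by
  have hu1 : IsUnit ((1 : R) - qq ^ (2 * n + 2)) := isUnit_one_sub_qq_pow (by omega)
  have hu2 : IsUnit ((1 : R) - PowerSeries.C cv * qq ^ (2 * n + 1)) :=
    isUnit_one_sub _ (ccC_mul_qq_pow _ _ (by omega))
  have c1 := Ring.mul_inverse_cancel _ hu1
  have c2 := Ring.mul_inverse_cancel _ hu2
  have hQ : ((∏ j ∈ Finset.range (n + 1), (1 - qq ^ (2 * j + 2))) *
        ∏ j ∈ Finset.range (n + 1), (1 - PowerSeries.C cv * qq ^ (2 * j + 1)))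
      = ((∏ j ∈ Finset.range n, (1 - qq ^ (2 * j + 2))) *
          ∏ j ∈ Finset.range n, (1 - PowerSeries.C cv * qq ^ (2 * j + 1)))
        * ((1 - qq ^ (2 * n + 2)) * (1 - PowerSeries.C cv * qq ^ (2 * n + 1))) := by
    rw [Finset.prod_range_succ, Finset.prod_range_succ]
    ring
  rw [vval, vval, hQ, Ring.mul_inverse_rev, Ring.mul_inverse_rev,
    Finset.prod_range_succ, Finset.prod_range_succ]
  set PA := ∏ j ∈ Finset.range n, (1 + PowerSeries.C av * qq ^ (2 * j + 1))
  set PD := ∏ j ∈ Finset.range n, (1 + PowerSeries.C dv * qq ^ (2 * j + 1))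
  set Q := (∏ j ∈ Finset.range n, (1 - qq ^ (2 * j + 2))) *
      ∏ j ∈ Finset.range n, (1 - PowerSeries.C cv * qq ^ (2 * j + 1))
  set K := PA * (1 + PowerSeries.C av * qq ^ (2 * n + 1)) * PD
      * (1 + PowerSeries.C dv * qq ^ (2 * n + 1)) * Ring.inverse Q
  linear_combination
    (K * (1 - PowerSeries.C cv * qq ^ (2 * n + 1))
      * Ring.inverse (1 - PowerSeries.C cv * qq ^ (2 * n + 1))) * c1 + K * c2

lemma key (n : ℕ) :
    PowerSeries.coeff (2 * n + 1) gser = 0 ∧ PowerSeries.coeff (2 * n) gser = vval n := by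
  induction n with
  | zero =>
    constructor
    · simp only [Nat.mul_zero, Nat.zero_add]
      refine cancel3 (B := 1 - qq) (C := 1 - PowerSeries.C cv) qq_ne
        (one_sub_ne (by rw [qq, PowerSeries.constantCoeff_X])) one_sub_Ccv_ne ?_
      rw [grec1]
      ring
    · rw [show 2 * 0 = 0 from rfl, g0, vval]
      simp [Ring.inverse_one]
  | succ n ih =>
    obtain ⟨ih1, ih2⟩ := ih
    have e1 : 2 * (n + 1) + 1 = 2 * n + 1 + 2 := by omega
    have e2 : 2 * (n + 1) = 2 * n + 2 := by omega
    constructor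
    · rw [e1]
      have h := grec (2 * n + 1)
      rw [ih1] at h
      refine cancel3 (B := 1 - qq ^ (2 * n + 1 + 2))
        (C := 1 - PowerSeries.C cv * qq ^ (2 * n + 1 + 1)) qq_ne
        (one_sub_ne (constCoeff_qq_pow (by omega)))
        (one_sub_ne (ccC_mul_qq_pow _ _ (by omega))) ?_
      rw [h]
      ring
    · rw [e2]
      have h := grec (2 * n)
      rw [ih2] at h
      have h2 := vrec n
      refine cancel3 (B := 1 - qq ^ (2 * n + 2))
        (C := 1 - PowerSeries.C cv * qq ^ (2 * n + 1)) qq_ne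
        (one_sub_ne (constCoeff_qq_pow (by omega)))
        (one_sub_ne (ccC_mul_qq_pow _ _ (by omega))) ?_
      rw [h, h2]

end FIN



/-- Writing `g(x) = ∑_{n ≥ 0} a_n xⁿ` with `a_n ∈ R`: for all `n ≥ 0`, `a_{2n+1} = 0` and
`a_{2n} = (−aq;q²)_n (−dq;q²)_n / ((q²;q²)_n (cq;q²)_n)`, the denominator being invertible in
`R` (its inverse given by `Ring.inverse`) since it has constant term `1`. -/
theorem statement17 (n : ℕ) :
    PowerSeries.coeff (2 * n + 1) gser = 0 ∧
    PowerSeries.coeff (2 * n) gser =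
      (∏ j ∈ Finset.range n, (1 + PowerSeries.C av * qq ^ (2 * j + 1))) *
        (∏ j ∈ Finset.range n, (1 + PowerSeries.C dv * qq ^ (2 * j + 1))) *
        Ring.inverse ((∏ j ∈ Finset.range n, (1 - qq ^ (2 * j + 2))) *
          ∏ j ∈ Finset.range n, (1 - PowerSeries.C cv * qq ^ (2 * j + 1))) := by
  exact ⟨(key n).1, (key n).2⟩

end Primc
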